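/- Let Ψ be a unit vector in H₁⊗H₂ (H_r finite-dimensional complex Hilbert spaces) and suppose (ψ₁,ψ₂) maximizes |⟨Ψ|φ₁⊗φ₂⟩|² over unit vectors. Then for any unit vector χ in H₂ orthogonal to ψ₂, ⟨Ψ|ψ₁⊗χ⟩ = 0. -/

import Mathlib

/-- If `(ψ₁,ψ₂)` maximizes `|⟨Ψ|φ₁⊗φ₂⟩|²` over unit vectors for a unit
vector `Ψ ∈ H₁⊗H₂` (coefficients `c`), then for any unit vector `χ ∈ H₂`
orthogonal to `ψ₂` we have `⟨Ψ|ψ₁⊗χ⟩ = 0`. -/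
theorem bipartite_maximizer_orthogonality (d₁ d₂ : ℕ)
    (c : Fin d₁ → Fin d₂ → ℂ)
    (hΨ : ∑ i, ∑ j, ‖c i j‖ ^ 2 = 1)
    (ψ₁ : Fin d₁ → ℂ) (ψ₂ : Fin d₂ → ℂ)
    (h₁ : ∑ i, ‖ψ₁ i‖ ^ 2 = 1)
    (h₂ : ∑ j, ‖ψ₂ j‖ ^ 2 = 1)
    (hmax : ∀ φ₁ : Fin d₁ → ℂ, ∀ φ₂ : Fin d₂ → ℂ,
      (∑ i, ‖φ₁ i‖ ^ 2 = 1) → (∑ j, ‖φ₂ j‖ ^ 2 = 1) →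
      ‖∑ i, ∑ j, (starRingEnd ℂ) (c i j) * φ₁ i * φ₂ j‖ ^ 2 ≤
        ‖∑ i, ∑ j, (starRingEnd ℂ) (c i j) * ψ₁ i * ψ₂ j‖ ^ 2)
    (χ : Fin d₂ → ℂ) (hχ : ∑ j, ‖χ j‖ ^ 2 = 1)
    (horth : ∑ j, (starRingEnd ℂ) (ψ₂ j) * χ j = 0) :
    ∑ i, ∑ j, (starRingEnd ℂ) (c i j) * ψ₁ i * χ j = 0 := by
  by_contra hB
  set A : ℂ := ∑ i, ∑ j, (starRingEnd ℂ) (c i j) * ψ₁ i * ψ₂ j with hA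
  set B : ℂ := ∑ i, ∑ j, (starRingEnd ℂ) (c i j) * ψ₁ i * χ j with hBdef
  have hb : 0 < ‖B‖ := norm_pos_iff.mpr hB
  set R : ℝ := ‖A‖ ^ 2 + ‖B‖ ^ 2 with hR
  have hRpos : 0 < R := by positivity
  set r : ℝ := Real.sqrt R with hr
  have hrpos : 0 < r := Real.sqrt_pos.mpr hRpos
  have hr2 : r ^ 2 = R := Real.sq_sqrt hRpos.le
  set φ₂ : Fin d₂ → ℂ := fun j =>
    ((starRingEnd ℂ) A * ψ₂ j + (starRingEnd ℂ) B * χ j) / (r : ℂ) with hφ₂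
  -- conjugate of orthogonality
  have horth' : ∑ j, ψ₂ j * (starRingEnd ℂ) (χ j) = 0 := by
    have := congrArg (starRingEnd ℂ) horth
    simpa [map_sum] using this
  -- norm of φ₂
  have hnorm : ∑ j, ‖φ₂ j‖ ^ 2 = 1 := by
    have key : ∀ j, ‖φ₂ j‖ ^ 2 =
        (Complex.normSq A * ‖ψ₂ j‖ ^ 2
          + Complex.normSq B * ‖χ j‖ ^ 2
          + 2 * ((starRingEnd ℂ) A * B * (ψ₂ j * (starRingEnd ℂ) (χ j))).re) / r ^ 2 := by
      intro j
      rw [hφ₂]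
      simp only [norm_div, Complex.norm_real, Real.norm_eq_abs, abs_of_pos hrpos, div_pow]
      congr 1
      rw [Complex.sq_norm, Complex.normSq_add, Complex.normSq_mul, Complex.normSq_mul,
        Complex.normSq_conj, Complex.normSq_conj, map_mul, Complex.sq_norm, Complex.sq_norm]
      simp only [Complex.conj_conj]
      ring_nf
    rw [Finset.sum_congr rfl (fun j _ => key j), ← Finset.sum_div]
    rw [Finset.sum_add_distrib, Finset.sum_add_distrib,
      ← Finset.mul_sum, ← Finset.mul_sum, h₂, hχ]
    have : ∑ j, 2 * ((starRingEnd ℂ) A * B * (ψ₂ j * (starRingEnd ℂ) (χ j))).re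
        = 2 * ((starRingEnd ℂ) A * B * ∑ j, ψ₂ j * (starRingEnd ℂ) (χ j)).re := by
      rw [← Finset.mul_sum, ← Complex.re_sum, ← Finset.mul_sum]
    rw [this, horth']
    simp only [mul_zero, Complex.zero_re, add_zero, hr2]
    rw [div_eq_one_iff_eq (ne_of_gt hRpos), hR, Complex.sq_norm, Complex.sq_norm]
    ring
  -- overlap with φ₂
  have hover : ∑ i, ∑ j, (starRingEnd ℂ) (c i j) * ψ₁ i * φ₂ j = (R : ℂ) / r := by
    have : ∀ i j, (starRingEnd ℂ) (c i j) * ψ₁ i * φ₂ j =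
        ((starRingEnd ℂ) A * ((starRingEnd ℂ) (c i j) * ψ₁ i * ψ₂ j)
          + (starRingEnd ℂ) B * ((starRingEnd ℂ) (c i j) * ψ₁ i * χ j)) / (r : ℂ) := by
      intro i j; rw [hφ₂]; ring
    simp only [this]
    simp only [← Finset.sum_div]
    congr 1
    rw [Finset.sum_congr rfl (fun i _ => Finset.sum_add_distrib),
      Finset.sum_add_distrib]
    simp only [← Finset.mul_sum]
    rw [← hA, ← hBdef, Complex.conj_mul', Complex.conj_mul']
    rw [hR]
    push_cast
    ring
  have := hmax ψ₁ φ₂ h₁ hnorm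
  rw [hover] at this
  have habs : ‖(R : ℂ) / r‖ = R / r := by
    rw [norm_div]
    simp [abs_of_pos hRpos, abs_of_pos hrpos]
  rw [habs, div_pow, hr2] at this
  have hRle : R ≤ ‖A‖ ^ 2 := by
    have : R ^ 2 / R ≤ ‖A‖ ^ 2 := this
    rwa [sq, mul_div_assoc, div_self (ne_of_gt hRpos), mul_one] at this
  nlinarith [sq_nonneg (‖B‖), hb]
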